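/- Symmetry action on the entangled string operator: let v₀, v₁, …, v_n be the vertices of a finite self-avoiding path γ with edges e₁, …, e_n (edge e_k joining v_{k−1} and v_k, with arbitrary orientations ∂₀e_k, ∂₁e_k ∈ {v_{k−1}, v_k}), and define the entangled string operator F̃_γ := (∏_{k=1}^{n} σ^z_{e_k}) · ∏_{k=1}^{n} i^{σ^x_{e_k}(τ^z_{∂₁e_k} − τ^z_{∂₀e_k})/2}. Then conjugation by the spin-flip on all vertices of the path gives (∏_{j=0}^{n} τ^x_{v_j}) · F̃_γ · (∏_{j=0}^{n} τ^x_{v_j}) = τ^z_{v_n} · τ^z_{v_0} · F̃_γ. Moreover, the dual string operator F_{γ̄} := ∏_{e∈γ̄} σ^x_e is invariant under this conjugation. -/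

import Mathlib

open Complex Matrix

set_option maxHeartbeats 1000000

theorem hcAux (c : ℂ) : Summable fun n : ℕ => ((Nat.factorial n : ℂ)⁻¹) * c ^ n := by
  have := NormedSpace.expSeries_summable' (𝕂 := ℂ) (𝔸 := ℂ) c
  simpa only [smul_eq_mul] using this

noncomputable section

/-- The operator acting as the 2×2 matrix `M` on the qubit at site `j` of a finite qubit
system and as the identity on all other sites. -/
def localOp {S : Type*} [Fintype S] [DecidableEq S] (j : S)
    (M : Matrix (Fin 2) (Fin 2) ℂ) :
    Matrix (S → Fin 2) (S → Fin 2) ℂ :=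
  Matrix.of fun f g => if ∀ k, k ≠ j → f k = g k then M (f j) (g j) else 0

/-- The Pauli `X` matrix. -/
def PX : Matrix (Fin 2) (Fin 2) ℂ := !![0, 1; 1, 0]

/-- The Pauli `Z` matrix. -/
def PZ : Matrix (Fin 2) (Fin 2) ℂ := !![1, 0; 0, -1]

/-- Operators on a system consisting of the vertex qubits `v₀, …, v_n` of a finite
self-avoiding path (indexed by `Fin (n+1)`, on the left) together with the edge qubits of
the ambient lattice patch (a finite type `EE`, on the right). -/
abbrev PathOp (n : ℕ) (EE : Type*) [Fintype EE] [DecidableEq EE] :=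
  Matrix ((Fin (n + 1) ⊕ EE) → Fin 2) ((Fin (n + 1) ⊕ EE) → Fin 2) ℂ

variable {EE : Type*} [Fintype EE] [DecidableEq EE]

/-- `τ^x_{v_j}`. -/
def txv (n : ℕ) (EE : Type*) [Fintype EE] [DecidableEq EE] (j : Fin (n + 1)) :
    PathOp n EE := localOp (Sum.inl j) PX

/-- `τ^z_{v_j}`. -/
def tzv (n : ℕ) (EE : Type*) [Fintype EE] [DecidableEq EE] (j : Fin (n + 1)) :
    PathOp n EE := localOp (Sum.inl j) PZ

/-- `σ^x_e` for an edge qubit `e`. -/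
def sxe (n : ℕ) {EE : Type*} [Fintype EE] [DecidableEq EE] (e : EE) :
    PathOp n EE := localOp (Sum.inr e) PX

/-- `σ^z_e` for an edge qubit `e`. -/
def sze (n : ℕ) {EE : Type*} [Fintype EE] [DecidableEq EE] (e : EE) :
    PathOp n EE := localOp (Sum.inr e) PZ

/-- The entangled string operator
`F̃_γ := (∏_{k=1}^{n} σ^z_{e_k}) · ∏_{k=1}^{n} i^{σ^x_{e_k}(τ^z_{∂₁e_k} − τ^z_{∂₀e_k})/2}`
along the path with edges `e_k = pe k` and orientations `∂₀ = d0`, `∂₁ = d1`. -/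
def Ftil (n : ℕ) {EE : Type*} [Fintype EE] [DecidableEq EE]
    (pe : Fin n → EE) (d0 d1 : Fin n → Fin (n + 1)) : PathOp n EE :=
  ((List.finRange n).map fun k => sze n (pe k)).prod *
    ((List.finRange n).map fun k =>
      NormedSpace.exp (((Real.pi : ℂ) * Complex.I / 4) •
        (sxe n (pe k) * (tzv n EE (d1 k) - tzv n EE (d0 k))))).prod

/-- The spin flip `∏_{j=0}^{n} τ^x_{v_j}` on all vertices of the path. -/
def Gflip (n : ℕ) (EE : Type*) [Fintype EE] [DecidableEq EE] : PathOp n EE :=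
  ((List.finRange (n + 1)).map fun j => txv n EE j).prod

/-! ### Generic lemmas about `localOp` -/

section LocalAux

variable {S : Type*} [Fintype S] [DecidableEq S]

lemma sum_update_aux (f : S → Fin 2) (j : S) (F : (S → Fin 2) → ℂ)
    (hF : ∀ h : S → Fin 2, (∃ k, k ≠ j ∧ h k ≠ f k) → F h = 0) :
    ∑ h : S → Fin 2, F h = ∑ x : Fin 2, F (Function.update f j x) := by
  have hne : Function.update f j 0 ≠ Function.update f j 1 := by
    intro h
    have := congrFun h j
    simp [Function.update_self] at this
  rw [show (∑ x : Fin 2, F (Function.update f j x)) =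
      ∑ h ∈ ({Function.update f j 0, Function.update f j 1} : Finset (S → Fin 2)), F h by
    rw [Finset.sum_pair hne, Fin.sum_univ_two]]
  apply (Finset.sum_subset (Finset.subset_univ _) ?_).symm
  intro h _ hmem
  apply hF
  by_contra hcon
  push_neg at hcon
  have hh : h = Function.update f j (h j) := by
    funext k
    by_cases hk : k = j
    · subst hk; simp
    · rw [Function.update_of_ne hk]
      exact hcon k hk
  apply hmem
  simp only [Finset.mem_insert, Finset.mem_singleton]
  have h2 : h j = 0 ∨ h j = 1 := by omega
  rcases h2 with h2 | h2
  · left; rw [hh, h2]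
  · right; rw [hh, h2]

lemma localOp_apply (j : S) (M : Matrix (Fin 2) (Fin 2) ℂ) (f g : S → Fin 2) :
    localOp j M f g = if ∀ k, k ≠ j → f k = g k then M (f j) (g j) else 0 := rfl

lemma localOp_mul_same (j : S) (M N : Matrix (Fin 2) (Fin 2) ℂ) :
    localOp j M * localOp j N = localOp j (M * N) := by
  ext f g
  rw [Matrix.mul_apply, localOp_apply]
  rw [sum_update_aux f j _ (fun h ⟨k, hk, hne⟩ => by
    rw [localOp_apply, if_neg, zero_mul]
    push_neg
    exact ⟨k, hk, fun hc => hne hc.symm⟩)]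
  have h1 : ∀ x : Fin 2, localOp j M f (Function.update f j x) = M (f j) x := by
    intro x
    rw [localOp_apply, if_pos, Function.update_self]
    intro k hk; rw [Function.update_of_ne hk]
  by_cases h : ∀ k, k ≠ j → f k = g k
  · rw [if_pos h, Matrix.mul_apply]
    congr 1
    funext x
    rw [h1 x, localOp_apply, if_pos, Function.update_self]
    intro k hk; rw [Function.update_of_ne hk]; exact h k hk
  · rw [if_neg h]
    apply Finset.sum_eq_zero
    intro x _
    rw [h1 x, localOp_apply, if_neg, mul_zero]
    intro hc
    exact h fun k hk => (Function.update_of_ne hk x f) ▸ hc k hk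

lemma localOp_mul_ne {i j : S} (hij : j ≠ i) (M N : Matrix (Fin 2) (Fin 2) ℂ) :
    localOp j M * localOp i N = Matrix.of fun f g =>
      if ∀ k, k ≠ j → k ≠ i → f k = g k then M (f j) (g j) * N (f i) (g i) else 0 := by
  ext f g
  rw [Matrix.mul_apply, Matrix.of_apply]
  rw [sum_update_aux f j _ (fun h ⟨k, hk, hne⟩ => by
    rw [localOp_apply, if_neg, zero_mul]
    push_neg
    exact ⟨k, hk, fun hc => hne hc.symm⟩)]
  have h1 : ∀ x : Fin 2, localOp j M f (Function.update f j x) = M (f j) x := by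
    intro x
    rw [localOp_apply, if_pos, Function.update_self]
    intro k hk; rw [Function.update_of_ne hk]
  have h2 : ∀ x : Fin 2,
      localOp i N (Function.update f j x) g =
        if x = g j ∧ (∀ k, k ≠ j → k ≠ i → f k = g k) then N (f i) (g i) else 0 := by
    intro x
    rw [localOp_apply]
    by_cases hc : ∀ k, k ≠ i → Function.update f j x k = g k
    · rw [if_pos hc, if_pos, Function.update_of_ne (Ne.symm hij)]
      constructor
      · have := hc j hij
        rwa [Function.update_self] at this
      · intro k hkj hki
        have := hc k hki
        rwa [Function.update_of_ne hkj] at this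
    · rw [if_neg hc, if_neg]
      rintro ⟨hx, hfg⟩
      apply hc
      intro k hki
      by_cases hkj : k = j
      · subst hkj; rw [Function.update_self]; exact hx
      · rw [Function.update_of_ne hkj]; exact hfg k hkj hki
  calc ∑ x : Fin 2, localOp j M f (Function.update f j x) * localOp i N (Function.update f j x) g
      = ∑ x : Fin 2, if x = g j then
          (if (∀ k, k ≠ j → k ≠ i → f k = g k) then M (f j) x * N (f i) (g i) else 0) else 0 := by
        apply Finset.sum_congr rfl
        intro x _
        rw [h1, h2]
        by_cases hx : x = g j
        · rw [if_pos hx]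
          by_cases hfg : ∀ k, k ≠ j → k ≠ i → f k = g k
          · rw [if_pos ⟨hx, hfg⟩, if_pos hfg]
          · rw [if_neg (fun h => hfg h.2), if_neg hfg, mul_zero]
        · rw [if_neg hx, if_neg (fun h => hx h.1), mul_zero]
    _ = _ := by
        rw [Finset.sum_ite_eq' Finset.univ (g j)
          (fun x => if (∀ k, k ≠ j → k ≠ i → f k = g k) then M (f j) x * N (f i) (g i) else 0)]
        simp

lemma commute_localOp_of_ne {i j : S} (hij : j ≠ i) (M N : Matrix (Fin 2) (Fin 2) ℂ) :
    Commute (localOp j M) (localOp i N) := by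
  unfold Commute SemiconjBy
  rw [localOp_mul_ne hij, localOp_mul_ne (Ne.symm hij)]
  ext f g
  simp only [Matrix.of_apply]
  have : (∀ k, k ≠ j → k ≠ i → f k = g k) ↔ (∀ k, k ≠ i → k ≠ j → f k = g k) :=
    ⟨fun h k h1 h2 => h k h2 h1, fun h k h1 h2 => h k h2 h1⟩
  rw [if_congr this rfl rfl]
  split_ifs
  · ring
  · rfl

lemma localOp_one (j : S) : localOp j (1 : Matrix (Fin 2) (Fin 2) ℂ) = 1 := by
  ext f g
  rw [localOp_apply]
  by_cases h : f = g
  · subst h; simp [Matrix.one_apply]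
  · rw [Matrix.one_apply_ne h]
    split_ifs with h2
    · have : f j ≠ g j := by
        intro hj
        exact h (funext fun k => by
          by_cases hk : k = j
          · subst hk; exact hj
          · exact h2 k hk)
      exact Matrix.one_apply_ne this
    · rfl

lemma localOp_neg (j : S) (M : Matrix (Fin 2) (Fin 2) ℂ) :
    localOp j (-M) = -(localOp j M) := by
  ext f g
  simp only [localOp_apply, Matrix.neg_apply]
  split_ifs <;> simp

end LocalAux

/-! ### Exponential lemmas -/

/-- exp of a scalar multiple of an idempotent in a Banach algebra. -/
theorem exp_smul_of_idem' {𝔸 : Type*} [NormedRing 𝔸] [NormedAlgebra ℂ 𝔸] [CompleteSpace 𝔸]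
    (c : ℂ) (P : 𝔸) (h : P * P = P) :
    NormedSpace.exp (c • P) = 1 + (Complex.exp c - 1) • P := by
  have hpow : ∀ n : ℕ, P ^ (n + 1) = P := by
    intro n
    induction n with
    | zero => exact pow_one P
    | succ k ih => rw [pow_succ, ih, h]
  rw [NormedSpace.exp_eq_tsum ℂ]
  beta_reduce
  have hsum : Summable fun n : ℕ => ((Nat.factorial n : ℂ)⁻¹) • (c • P) ^ n :=
    NormedSpace.expSeries_summable' (c • P)
  rw [Summable.tsum_eq_zero_add hsum]
  have h2 : ∀ n : ℕ, ((Nat.factorial (n + 1) : ℂ)⁻¹) • (c • P) ^ (n + 1) =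
      ((Nat.factorial (n + 1) : ℂ)⁻¹ * c ^ (n + 1)) • P := by
    intro n
    rw [smul_pow, hpow, smul_smul]
  rw [tsum_congr h2]
  have hc : Summable fun n : ℕ => ((Nat.factorial n : ℂ)⁻¹) * c ^ n := hcAux c
  have hc' : Summable fun n : ℕ => ((Nat.factorial (n + 1) : ℂ)⁻¹) * c ^ (n + 1) :=
    (summable_nat_add_iff 1).mpr hc
  rw [Summable.tsum_smul_const hc']
  have he : Complex.exp c = ∑' n : ℕ, ((Nat.factorial n : ℂ)⁻¹) * c ^ n := by
    rw [Complex.exp_eq_exp_ℂ, NormedSpace.exp_eq_tsum ℂ]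
    simp [smul_eq_mul]
  have he2 : Complex.exp c = 1 + ∑' n : ℕ, ((Nat.factorial (n + 1) : ℂ)⁻¹) * c ^ (n + 1) := by
    rw [he, Summable.tsum_eq_zero_add hc]
    simp
  rw [he2]
  simp

theorem Matrix.exp_smul_of_idem {m : Type*} [Fintype m] [DecidableEq m]
    (c : ℂ) (P : Matrix m m ℂ) (h : P * P = P) :
    NormedSpace.exp (c • P) = 1 + (Complex.exp c - 1) • P := by
  letI : SeminormedRing (Matrix m m ℂ) := Matrix.linftyOpSemiNormedRing
  letI : NormedRing (Matrix m m ℂ) := Matrix.linftyOpNormedRing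
  letI : NormedAlgebra ℂ (Matrix m m ℂ) := Matrix.linftyOpNormedAlgebra
  exact exp_smul_of_idem' c P h

/-- exp of `(π I / 2) • B` for an involution `B`. -/
theorem Matrix.exp_pi_div_two_smul_invol {m : Type*} [Fintype m] [DecidableEq m]
    (B : Matrix m m ℂ) (h : B * B = 1) :
    NormedSpace.exp (((Real.pi : ℂ) * Complex.I / 2) • B) = Complex.I • B := by
  set p : ℂ := (Real.pi : ℂ) * Complex.I with hp
  set R : Matrix m m ℂ := (2 : ℂ)⁻¹ • (1 + B) with hR
  have hX : (1 + B) * (1 + B) = (2 : ℂ) • (1 + B) := by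
    rw [mul_add, add_mul, add_mul, h]
    simp only [one_mul, mul_one, smul_add, two_smul]
    abel
  have hRR : R * R = R := by
    rw [hR, smul_mul_assoc, mul_smul_comm, smul_smul, hX, smul_smul]
    norm_num
  have hdecomp : (p / 2) • B = p • R + (-(p / 2)) • (1 : Matrix m m ℂ) := by
    rw [hR]
    module
  have hcomm : Commute (p • R) ((-(p / 2)) • (1 : Matrix m m ℂ)) :=
    ((Commute.one_right R).smul_left p).smul_right _
  rw [show ((Real.pi : ℂ) * Complex.I / 2) = p / 2 by rw [hp]]
  rw [hdecomp, Matrix.exp_add_of_commute _ _ hcomm]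
  have e1 : NormedSpace.exp (p • R) = 1 + (Complex.exp p - 1) • R :=
    Matrix.exp_smul_of_idem p R hRR
  have e2 : NormedSpace.exp ((-(p / 2)) • (1 : Matrix m m ℂ)) =
      1 + (Complex.exp (-(p / 2)) - 1) • (1 : Matrix m m ℂ) :=
    Matrix.exp_smul_of_idem _ 1 (one_mul 1)
  have hep : Complex.exp p = -1 := Complex.exp_pi_mul_I
  have hep2 : Complex.exp (-(p / 2)) = -Complex.I := by
    rw [show -(p / 2) = ((-(Real.pi / 2) : ℝ) : ℂ) * Complex.I by rw [hp]; push_cast; ring]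
    rw [Complex.exp_mul_I, ← Complex.ofReal_cos, ← Complex.ofReal_sin]
    simp [Real.cos_pi_div_two, Real.sin_pi_div_two]
  rw [e1, e2, hep, hep2]
  have hfirst : (1 : Matrix m m ℂ) + ((-1 : ℂ) - 1) • R = -B := by
    rw [hR]
    module
  have hsecond : (1 : Matrix m m ℂ) + (-Complex.I - 1) • (1 : Matrix m m ℂ)
      = (-Complex.I) • (1 : Matrix m m ℂ) := by
    module
  rw [hfirst, hsecond, mul_smul_comm, mul_one, smul_neg, neg_smul, neg_neg]

/-! ### List product lemmas -/

lemma conj_list_prod {R : Type*} [Monoid R] (G : R) (hG : G * G = 1) (l : List R) :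
    G * l.prod * G = (l.map fun x => G * x * G).prod := by
  have hGx : ∀ x : R, G * (G * x) = x := fun x => by rw [← mul_assoc, hG, one_mul]
  induction l with
  | nil => simpa using hG
  | cons a t ih =>
    simp only [List.prod_cons, List.map_cons]
    rw [← ih]
    simp only [mul_assoc]
    rw [hGx]

lemma prod_mul_prod_of_commute {R : Type*} [Monoid R] {ι : Type*} (l : List ι) (a b : ι → R)
    (h : ∀ i ∈ l, ∀ j ∈ l, Commute (b i) (a j)) :
    (l.map fun i => a i * b i).prod = (l.map a).prod * (l.map b).prod := by
  induction l with
  | nil => simp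
  | cons p t ih =>
    simp only [List.prod_cons, List.map_cons]
    rw [ih (fun i hi j hj => h i (List.mem_cons_of_mem _ hi) j (List.mem_cons_of_mem _ hj))]
    have hc : Commute (b p) ((t.map a).prod) :=
      Commute.list_prod_right _ _ (fun x hx => by
        rcases List.mem_map.mp hx with ⟨j, hj, rfl⟩
        exact h p (List.mem_cons_self) j (List.mem_cons_of_mem _ hj))
    simp only [mul_assoc]
    rw [← mul_assoc (b p), hc.eq, mul_assoc]

lemma list_prod_diagonal {m ι : Type*} [Fintype m] [DecidableEq m] (l : List ι)
    (d : ι → m → ℂ) :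
    (l.map fun i => Matrix.diagonal (d i)).prod
      = Matrix.diagonal (fun f => (l.map fun i => d i f).prod) := by
  induction l with
  | nil => simp [Matrix.diagonal_one]
  | cons a t ih =>
    simp only [List.prod_cons, List.map_cons, ih, Matrix.diagonal_mul_diagonal]

lemma telescope_aux (n : ℕ) (h : Fin (n + 1) → ℂ) (hsq : ∀ i, h i * h i = 1) :
    ((List.finRange n).map fun k : Fin n => h k.castSucc * h k.succ).prod
      = h 0 * h (Fin.last n) := by
  induction n with
  | zero => simpa using (hsq 0).symm
  | succ m ih =>
    rw [List.finRange_succ]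
    simp only [List.map_cons, List.map_map, List.prod_cons]
    have hmap : ((List.finRange m).map
          ((fun k : Fin (m + 1) => h k.castSucc * h k.succ) ∘ Fin.succ)).prod
        = ((List.finRange m).map fun k : Fin m =>
            (h ∘ Fin.succ) k.castSucc * (h ∘ Fin.succ) k.succ).prod := by
      congr 1
    rw [hmap, ih (h ∘ Fin.succ) (fun i => hsq _)]
    simp only [Function.comp_apply, Fin.succ_last]
    have h0 : (Fin.castSucc (0 : Fin (m + 1))) = (0 : Fin (m + 2)) := rfl
    rw [h0]
    have key : h (0 : Fin (m + 1)).succ * (h (0 : Fin (m + 1)).succ * h (Fin.last (m + 1)))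
        = h (Fin.last (m + 1)) := by
      rw [← mul_assoc, hsq, one_mul]
    calc h 0 * h (0 : Fin (m+1)).succ * (h ((0 : Fin (m+1)).succ) * h (Fin.last (m+1)))
        = h 0 * (h (0 : Fin (m+1)).succ * (h ((0 : Fin (m+1)).succ) * h (Fin.last (m+1)))) := by
          rw [mul_assoc]
      _ = h 0 * h (Fin.last (m + 1)) := by rw [key]

/-! ### Pauli matrix computations -/

lemma PX_mul_PX : PX * PX = 1 := by
  ext i j
  fin_cases i <;> fin_cases j <;>
    simp [PX, Matrix.mul_apply, Fin.sum_univ_two, Matrix.one_apply]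

lemma PZ_mul_PZ : PZ * PZ = 1 := by
  ext i j
  fin_cases i <;> fin_cases j <;>
    simp [PZ, Matrix.mul_apply, Fin.sum_univ_two, Matrix.one_apply]

lemma PX_mul_PZ : PX * PZ = -(PZ * PX) := by
  ext i j
  fin_cases i <;> fin_cases j <;>
    simp [PX, PZ, Matrix.mul_apply, Fin.sum_univ_two]

def zc : Fin 2 → ℂ := fun x => if x = 0 then 1 else -1

lemma zc_sq (x : Fin 2) : zc x * zc x = 1 := by
  fin_cases x <;> norm_num [zc]

lemma PZ_diag (y : Fin 2) : PZ y y = zc y := by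
  fin_cases y <;> norm_num [PZ, zc]

lemma PZ_off (x y : Fin 2) (h : x ≠ y) : PZ x y = 0 := by
  fin_cases x <;> fin_cases y <;> simp_all [PZ]

/-! ### Operator-level lemmas -/

section OpLemmas

variable (n : ℕ)

lemma tzv_eq_diagonal (j : Fin (n + 1)) :
    tzv n EE j = Matrix.diagonal (fun f => zc (f (Sum.inl j))) := by
  ext f g
  rw [tzv, localOp_apply]
  by_cases h : f = g
  · subst h
    rw [Matrix.diagonal_apply_eq, if_pos (fun _ _ => rfl), PZ_diag]
  · rw [Matrix.diagonal_apply_ne _ h]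
    split_ifs with h2
    · apply PZ_off
      intro hj
      exact h (funext fun k => by
        by_cases hk : k = Sum.inl j
        · subst hk; exact hj
        · exact h2 k hk)
    · rfl

lemma commute_sxe_tzv (e : EE) (v : Fin (n + 1)) : Commute (sxe n e) (tzv n EE v) :=
  commute_localOp_of_ne (by simp) PX PZ

lemma commute_tzv_tzv (v w : Fin (n + 1)) : Commute (tzv n EE v) (tzv n EE w) := by
  by_cases h : v = w
  · subst h; exact Commute.refl _
  · exact commute_localOp_of_ne (by simp [h]) PZ PZ

lemma commute_tzv_sze (v : Fin (n + 1)) (e : EE) : Commute (tzv n EE v) (sze n e) :=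
  commute_localOp_of_ne (by simp) PZ PZ

lemma tzv_mul_self (v : Fin (n + 1)) : tzv n EE v * tzv n EE v = 1 := by
  rw [tzv, localOp_mul_same, PZ_mul_PZ, localOp_one]

lemma sxe_mul_self (e : EE) : sxe n e * sxe n e = 1 := by
  rw [sxe, localOp_mul_same, PX_mul_PX, localOp_one]

lemma txv_mul_self (v : Fin (n + 1)) : txv n EE v * txv n EE v = 1 := by
  rw [txv, localOp_mul_same, PX_mul_PX, localOp_one]

lemma txv_anticomm_tzv (v : Fin (n + 1)) :
    txv n EE v * tzv n EE v = -(tzv n EE v * txv n EE v) := by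
  rw [txv, tzv, localOp_mul_same, localOp_mul_same, ← localOp_neg, PX_mul_PZ]

lemma commute_G_edge (M : Matrix (Fin 2) (Fin 2) ℂ) (e : EE) :
    Commute (Gflip n EE) (localOp (Sum.inr e) M) := by
  apply Commute.list_prod_left
  intro x hx
  rcases List.mem_map.mp hx with ⟨b, _, rfl⟩
  exact commute_localOp_of_ne (by simp) PX M

lemma prodX_sq (l : List (Fin (n + 1))) (hl : l.Nodup) :
    (l.map (txv n EE)).prod * (l.map (txv n EE)).prod = 1 := by
  induction l with
  | nil => simp
  | cons a t ih =>
    rcases List.nodup_cons.mp hl with ⟨ha, ht⟩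
    simp only [List.map_cons, List.prod_cons]
    have hcomm : Commute (txv n EE a) ((t.map (txv n EE)).prod) := by
      apply Commute.list_prod_right
      intro x hx
      rcases List.mem_map.mp hx with ⟨b, hb, rfl⟩
      apply commute_localOp_of_ne
      simp only [ne_eq, Sum.inl.injEq]
      rintro rfl
      exact ha hb
    set x := txv n EE a
    set P := (t.map (txv n EE)).prod
    calc (x * P) * (x * P) = x * ((P * x) * P) := by simp only [mul_assoc]
      _ = x * ((x * P) * P) := by rw [← hcomm.eq]
      _ = (x * x) * (P * P) := by simp only [mul_assoc]
      _ = 1 := by rw [txv_mul_self, ih ht, one_mul]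

lemma G_sq : Gflip n EE * Gflip n EE = 1 := by
  rw [Gflip]
  exact prodX_sq n _ (List.nodup_finRange _)

lemma prodX_anti (l : List (Fin (n + 1))) (j : Fin (n + 1)) (hl : l.Nodup) (hj : j ∈ l) :
    (l.map (txv n EE)).prod * tzv n EE j = -(tzv n EE j * (l.map (txv n EE)).prod) := by
  induction l with
  | nil => simp at hj
  | cons a t ih =>
    rcases List.nodup_cons.mp hl with ⟨ha, ht⟩
    simp only [List.map_cons, List.prod_cons]
    set x := txv n EE a with hx
    set P := (t.map (txv n EE)).prod with hP
    set z := tzv n EE j with hz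
    rcases List.mem_cons.mp hj with rfl | hjt
    · -- j = a, so j ∉ t
      have hcomm : Commute z P := by
        rw [hP]
        apply Commute.list_prod_right
        intro y hy
        rcases List.mem_map.mp hy with ⟨b, hb, rfl⟩
        apply commute_localOp_of_ne
        simp only [ne_eq, Sum.inl.injEq]
        rintro rfl
        exact ha hb
      have hanti : x * z = -(z * x) := txv_anticomm_tzv n j
      calc (x * P) * z = x * (P * z) := by rw [mul_assoc]
        _ = x * (z * P) := by rw [hcomm.eq]
        _ = (x * z) * P := by rw [mul_assoc]
        _ = (-(z * x)) * P := by rw [hanti]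
        _ = -(z * (x * P)) := by rw [neg_mul, mul_assoc]
    · have hja : j ≠ a := by
        rintro rfl
        exact ha hjt
      have hcomm : Commute x z := by
        apply commute_localOp_of_ne
        simp only [ne_eq, Sum.inl.injEq]
        exact fun h => hja h.symm
      calc (x * P) * z = x * (P * z) := by rw [mul_assoc]
        _ = x * (-(z * P)) := by rw [ih ht hjt]
        _ = (-(x * z)) * P := by rw [mul_neg, neg_mul, mul_assoc]
        _ = (-(z * x)) * P := by rw [hcomm.eq]
        _ = -(z * (x * P)) := by rw [neg_mul, mul_assoc]

lemma G_anticomm_tzv (j : Fin (n + 1)) :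
    Gflip n EE * tzv n EE j = -(tzv n EE j * Gflip n EE) := by
  rw [Gflip]
  exact prodX_anti n _ j (List.nodup_finRange _) (List.mem_finRange j)

lemma G_conj_tzv (j : Fin (n + 1)) :
    Gflip n EE * tzv n EE j * Gflip n EE = -(tzv n EE j) := by
  rw [G_anticomm_tzv, neg_mul, mul_assoc, G_sq, mul_one]

lemma commute_tzv_A (v : Fin (n + 1)) (e : EE) (a b : Fin (n + 1)) :
    Commute (tzv n EE v) (sxe n e * (tzv n EE a - tzv n EE b)) :=
  ((commute_sxe_tzv n e v).symm).mul_right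
    (((commute_tzv_tzv n v a)).sub_right ((commute_tzv_tzv n v b)))

/-- Key per-edge conjugation computation. -/
lemma key_conj (e : EE) (a b : Fin (n + 1)) :
    Gflip n EE * NormedSpace.exp (((Real.pi : ℂ) * Complex.I / 4) •
        (sxe n e * (tzv n EE a - tzv n EE b))) * Gflip n EE
      = (tzv n EE a * tzv n EE b) * NormedSpace.exp (((Real.pi : ℂ) * Complex.I / 4) •
        (sxe n e * (tzv n EE a - tzv n EE b))) := by
  have hG2 : Gflip n EE * Gflip n EE = 1 := G_sq n
  set G := Gflip n EE with hGdef
  set sx := sxe n e with hsx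
  set za := tzv n EE a with hza
  set zb := tzv n EE b with hzb
  set c : ℂ := (Real.pi : ℂ) * Complex.I / 4 with hc
  set A : PathOp n EE := sx * (za - zb) with hA
  have cxa : sx * za = za * sx := (commute_sxe_tzv n e a).eq
  have cxb : sx * zb = zb * sx := (commute_sxe_tzv n e b).eq
  have czz : za * zb = zb * za := (commute_tzv_tzv n a b).eq
  have hxx : sx * sx = 1 := sxe_mul_self n e
  have hzaza : za * za = 1 := tzv_mul_self n a
  have hzbzb : zb * zb = 1 := tzv_mul_self n b
  have hB1 : (sx * za) * (sx * za) = 1 := by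
    calc (sx * za) * (sx * za) = sx * ((za * sx) * za) := by simp only [mul_assoc]
      _ = sx * ((sx * za) * za) := by rw [← cxa]
      _ = (sx * sx) * (za * za) := by simp only [mul_assoc]
      _ = 1 := by rw [hxx, hzaza, one_mul]
  have hB0 : (sx * zb) * (sx * zb) = 1 := by
    calc (sx * zb) * (sx * zb) = sx * ((zb * sx) * zb) := by simp only [mul_assoc]
      _ = sx * ((sx * zb) * zb) := by rw [← cxb]
      _ = (sx * sx) * (zb * zb) := by simp only [mul_assoc]
      _ = 1 := by rw [hxx, hzbzb, one_mul]
  have hB1B0 : (sx * za) * (sx * zb) = za * zb := by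
    calc (sx * za) * (sx * zb) = sx * ((za * sx) * zb) := by simp only [mul_assoc]
      _ = sx * ((sx * za) * zb) := by rw [← cxa]
      _ = (sx * sx) * (za * zb) := by simp only [mul_assoc]
      _ = za * zb := by rw [hxx, one_mul]
  have hB0B1 : (sx * zb) * (sx * za) = za * zb := by
    calc (sx * zb) * (sx * za) = sx * ((zb * sx) * za) := by simp only [mul_assoc]
      _ = sx * ((sx * zb) * za) := by rw [← cxb]
      _ = (sx * sx) * (zb * za) := by simp only [mul_assoc]
      _ = za * zb := by rw [hxx, one_mul, ← czz]
  have hcommB : Commute (sx * za) (sx * zb) := by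
    unfold Commute SemiconjBy
    rw [hB1B0, hB0B1]
  -- conjugation of A by G
  have hGsx : G * sx = sx * G := (commute_G_edge n PX e).eq
  have hGA : G * A * G = -A := by
    have h1 : G * A * G = sx * (G * (za - zb) * G) := by
      calc G * (sx * (za - zb)) * G = (G * sx) * ((za - zb) * G) := by simp only [mul_assoc]
        _ = (sx * G) * ((za - zb) * G) := by rw [hGsx]
        _ = sx * (G * (za - zb) * G) := by simp only [mul_assoc]
    rw [h1]
    have h2 : G * (za - zb) * G = -(za - zb) := by
      rw [mul_sub, sub_mul]
      rw [show G * za * G = -za from G_conj_tzv n a, show G * zb * G = -zb from G_conj_tzv n b]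
      abel
    rw [h2, mul_neg]
  -- conjugation of the exponential
  set u : (PathOp n EE)ˣ := ⟨G, G, hG2, hG2⟩ with hu
  have hconj : G * NormedSpace.exp (c • A) * G = NormedSpace.exp ((-c) • A) := by
    have heq := Matrix.exp_units_conj u (c • A)
    have hval : (u : PathOp n EE) = G := rfl
    have hvalinv : ((u⁻¹ : (PathOp n EE)ˣ) : PathOp n EE) = G := rfl
    rw [hval, hvalinv] at heq
    have harg : G * (c • A) * G = (-c) • A := by
      rw [mul_smul_comm, smul_mul_assoc, hGA, smul_neg, ← neg_smul]
    rw [harg] at heq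
    exact heq.symm
  have hsplit : NormedSpace.exp ((-c) • A)
      = NormedSpace.exp ((-(2 * c)) • A) * NormedSpace.exp (c • A) := by
    rw [← Matrix.exp_add_of_commute _ _ (((Commute.refl A).smul_left _).smul_right _)]
    congr 1
    rw [← add_smul]
    congr 1
    ring
  have hAsub : A = sx * za - sx * zb := by rw [hA, mul_sub]
  have hval2 : NormedSpace.exp ((-(2 * c)) • A) = za * zb := by
    have hAsum : (-(2 * c)) • A
        = ((Real.pi : ℂ) * Complex.I / 2) • (-(sx * za))
          + ((Real.pi : ℂ) * Complex.I / 2) • (sx * zb) := by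
      rw [hAsub, hc]
      module
    rw [hAsum, Matrix.exp_add_of_commute _ _
      (((hcommB.neg_left).smul_left _).smul_right _)]
    rw [Matrix.exp_pi_div_two_smul_invol _ (by rw [neg_mul_neg, hB1]),
        Matrix.exp_pi_div_two_smul_invol _ hB0]
    rw [smul_mul_smul_comm, Complex.I_mul_I, neg_mul, hB1B0]
    simp
  rw [hconj, hsplit, hval2]

end OpLemmas

/-- Let `v₀, …, v_n` be the vertices of a finite self-avoiding path `γ`
with (distinct) edges `e₁, …, e_n`, the edge `e_k` joining `v_{k−1}` and `v_k` with an
arbitrary orientation.  Conjugating the entangled string operator by the spin-flip on all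
vertices of the path gives
`(∏_{j} τ^x_{v_j}) · F̃_γ · (∏_{j} τ^x_{v_j}) = τ^z_{v_n} · τ^z_{v_0} · F̃_γ`.
Moreover any dual string operator `F_{γ̄} := ∏_{e∈γ̄} σ^x_e` is invariant under this
conjugation. -/
theorem symmetry_action_on_entangled_string (n : ℕ)
    (pe : Fin n → EE) (hpe : Function.Injective pe)
    (d0 d1 : Fin n → Fin (n + 1))
    (hor : ∀ k : Fin n, (d0 k = k.castSucc ∧ d1 k = k.succ) ∨
      (d0 k = k.succ ∧ d1 k = k.castSucc)) :
    Gflip n EE * Ftil n pe d0 d1 * Gflip n EE =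
        tzv n EE (Fin.last n) * tzv n EE 0 * Ftil n pe d0 d1 ∧
      ∀ (m : ℕ) (de : Fin m → EE),
        Gflip n EE * ((List.finRange m).map fun l => sxe n (de l)).prod * Gflip n EE =
          ((List.finRange m).map fun l => sxe n (de l)).prod := by
  have hG2 : Gflip n EE * Gflip n EE = 1 := G_sq n
  constructor
  · set G := Gflip n EE with hGdef
    let E : Fin n → PathOp n EE := fun k =>
      NormedSpace.exp (((Real.pi : ℂ) * Complex.I / 4) •
        (sxe n (pe k) * (tzv n EE (d1 k) - tzv n EE (d0 k))))
    let Z : Fin n → PathOp n EE := fun k => tzv n EE (d1 k) * tzv n EE (d0 k)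
    let Sz : PathOp n EE := ((List.finRange n).map fun k => sze n (pe k)).prod
    let Ep : PathOp n EE := ((List.finRange n).map E).prod
    have hF : Ftil n pe d0 d1 = Sz * Ep := rfl
    rw [hF]
    have hGSz : Commute G Sz := by
      apply Commute.list_prod_right
      intro x hx
      rcases List.mem_map.mp hx with ⟨k, _, rfl⟩
      exact commute_G_edge n PZ (pe k)
    have hstep1 : G * (Sz * Ep) * G = Sz * (G * Ep * G) := by
      calc G * (Sz * Ep) * G = (G * Sz) * (Ep * G) := by simp only [mul_assoc]
        _ = (Sz * G) * (Ep * G) := by rw [hGSz.eq]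
        _ = Sz * (G * Ep * G) := by simp only [mul_assoc]
    rw [hstep1]
    have key : ∀ k : Fin n, G * E k * G = Z k * E k := fun k =>
      key_conj n (pe k) (d1 k) (d0 k)
    have hcommEZ : ∀ i : Fin n, ∀ j : Fin n, Commute (E i) (Z j) := by
      intro i j
      have h1 : Commute (tzv n EE (d1 j) * tzv n EE (d0 j))
          ((((Real.pi : ℂ) * Complex.I / 4)) •
            (sxe n (pe i) * (tzv n EE (d1 i) - tzv n EE (d0 i)))) :=
        ((commute_tzv_A n (d1 j) (pe i) (d1 i) (d0 i)).mul_left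
          (commute_tzv_A n (d0 j) (pe i) (d1 i) (d0 i))).smul_right _
      exact h1.symm.exp_left
    have hconjEp : G * Ep * G = ((List.finRange n).map Z).prod * Ep := by
      rw [show Ep = ((List.finRange n).map E).prod from rfl]
      rw [conj_list_prod G hG2, List.map_map]
      rw [show ((fun x => G * x * G) ∘ E) = fun k => Z k * E k from funext key]
      exact prod_mul_prod_of_commute _ Z E (fun i _ j _ => hcommEZ i j)
    have hZprod : ((List.finRange n).map Z).prod = tzv n EE (Fin.last n) * tzv n EE 0 := by
      have hZk : ∀ k : Fin n, Z k = Matrix.diagonal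
          (fun f : (Fin (n + 1) ⊕ EE) → Fin 2 =>
            zc (f (Sum.inl k.castSucc)) * zc (f (Sum.inl k.succ))) := by
        intro k
        rcases hor k with ⟨h0, h1⟩ | ⟨h0, h1⟩
        · show tzv n EE (d1 k) * tzv n EE (d0 k) = _
          rw [h0, h1, tzv_eq_diagonal, tzv_eq_diagonal, Matrix.diagonal_mul_diagonal]
          exact congrArg Matrix.diagonal (funext fun f => mul_comm _ _)
        · show tzv n EE (d1 k) * tzv n EE (d0 k) = _
          rw [h0, h1, tzv_eq_diagonal, tzv_eq_diagonal, Matrix.diagonal_mul_diagonal]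
      rw [List.map_congr_left (fun k _ => hZk k), list_prod_diagonal,
        tzv_eq_diagonal, tzv_eq_diagonal, Matrix.diagonal_mul_diagonal]
      refine congrArg Matrix.diagonal (funext fun f => ?_)
      have htel := telescope_aux n (fun i => zc (f (Sum.inl i))) (fun i => zc_sq _)
      calc ((List.finRange n).map fun k : Fin n =>
            zc (f (Sum.inl k.castSucc)) * zc (f (Sum.inl k.succ))).prod
          = zc (f (Sum.inl (0 : Fin (n + 1)))) * zc (f (Sum.inl (Fin.last n))) := htel
        _ = _ := mul_comm _ _
    rw [hconjEp, hZprod]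
    have hts : ∀ v : Fin (n + 1), Commute (tzv n EE v) Sz := by
      intro v
      apply Commute.list_prod_right
      intro x hx
      rcases List.mem_map.mp hx with ⟨k, _, rfl⟩
      exact commute_tzv_sze n v (pe k)
    have hcommZSz : Commute (tzv n EE (Fin.last n) * tzv n EE 0) Sz :=
      Commute.mul_left (hts (Fin.last n)) (hts 0)
    calc Sz * ((tzv n EE (Fin.last n) * tzv n EE 0) * Ep)
        = (Sz * (tzv n EE (Fin.last n) * tzv n EE 0)) * Ep := (mul_assoc _ _ _).symm
      _ = ((tzv n EE (Fin.last n) * tzv n EE 0) * Sz) * Ep := by rw [← hcommZSz.eq]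
      _ = (tzv n EE (Fin.last n) * tzv n EE 0) * (Sz * Ep) := mul_assoc _ _ _
  · intro m de
    have hc : Commute (Gflip n EE) (((List.finRange m).map fun l => sxe n (de l)).prod) := by
      apply Commute.list_prod_right
      intro x hx
      rcases List.mem_map.mp hx with ⟨l, _, rfl⟩
      exact commute_G_edge n PX (de l)
    rw [hc.eq, mul_assoc, hG2, mul_one]

end
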